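/- If σ is a cyclic permutation of a set of size n and τ is any permutation that is a product of k disjoint transpositions, then the permutation στ has at most k+1 cycles. -/

import Mathlib

open Equiv

/-- The number of cycles of a permutation, counting fixed points as cycles. -/
def cycleCount {α : Type*} [Fintype α] [DecidableEq α] (σ : Equiv.Perm α) : ℕ :=
  σ.cycleType.card + (Finset.univ.filter fun x => σ x = x).card

namespace CycleCountAux

open Equiv.Perm

variable {α : Type*} [Fintype α] [DecidableEq α]

/-- Number of `SameCycle` equivalence classes. -/
noncomputable def Q (f : Perm α) : ℕ :=
  Nat.card (Quotient (SameCycle.setoid f))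

theorem sameCycle_mul_swap (f : Perm α) (a b x y : α)
    (h : (f * Equiv.swap a b).SameCycle x y) :
    f.SameCycle x y ∨
      ((f.SameCycle x a ∨ f.SameCycle x b) ∧ (f.SameCycle y a ∨ f.SameCycle y b)) := by
  set ρ := f * Equiv.swap a b with hρ
  obtain ⟨m, -, rfl⟩ := h.exists_pow_eq'
  clear h
  induction m with
  | zero =>
    left; simpa using Equiv.Perm.SameCycle.refl f x
  | succ m ih =>
    have hstep : (ρ ^ (m + 1)) x = ρ ((ρ ^ m) x) := by
      rw [pow_succ' ρ m]; rfl
    set y := (ρ ^ m) x with hy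
    rw [hstep]
    have happly : ∀ z : α, f.SameCycle z (f z) := fun z => ⟨1, by simp⟩
    by_cases hya : y = a
    · have hρy : ρ y = f b := by
        rw [hya, hρ, Equiv.Perm.mul_apply, Equiv.swap_apply_left]
      rw [hρy]
      right
      refine ⟨?_, Or.inr (happly b).symm⟩
      rcases ih with h' | ⟨hx, -⟩
      · exact Or.inl (hya ▸ h')
      · exact hx
    · by_cases hyb : y = b
      · have hρy : ρ y = f a := by
          rw [hyb, hρ, Equiv.Perm.mul_apply, Equiv.swap_apply_right]
        rw [hρy]
        right
        refine ⟨?_, Or.inl (happly a).symm⟩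
        rcases ih with h' | ⟨hx, -⟩
        · exact Or.inr (hyb ▸ h')
        · exact hx
      · have hρy : ρ y = f y := by
          rw [hρ, Equiv.Perm.mul_apply, Equiv.swap_apply_of_ne_of_ne hya hyb]
        rw [hρy]
        rcases ih with h' | ⟨hx, hy'⟩
        · exact Or.inl (h'.trans (happly y))
        · refine Or.inr ⟨hx, ?_⟩
          rcases hy' with h' | h'
          · exact Or.inl ((happly y).symm.trans h')
          · exact Or.inr ((happly y).symm.trans h')

theorem Q_mul_swap_add_one_le (f : Perm α) (a b : α) :
    Q (f * Equiv.swap a b) + 1 ≤ Q f + 2 := by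
  classical
  set ρ := f * Equiv.swap a b with hρ
  have hfρ : f = ρ * Equiv.swap a b := by
    rw [hρ, mul_assoc, Equiv.swap_mul_self, mul_one]
  -- N' x : x is in the same ρ-cycle as a or b
  set N' : α → Prop := fun x => ρ.SameCycle x a ∨ ρ.SameCycle x b with hN'
  have hB : ∀ x y : α, ρ.SameCycle x y →
      f.SameCycle x y ∨
        ((f.SameCycle x a ∨ f.SameCycle x b) ∧ (f.SameCycle y a ∨ f.SameCycle y b)) :=
    fun x y h => sameCycle_mul_swap f a b x y h
  have hB' : ∀ x y : α, f.SameCycle x y → ρ.SameCycle x y ∨ (N' x ∧ N' y) := by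
    intro x y h
    rw [hfρ] at h
    exact sameCycle_mul_swap ρ a b x y h
  have hNa : ∀ x : α, f.SameCycle x a → N' x := by
    intro x h
    rcases hB' x a h with h' | ⟨h', -⟩
    · exact Or.inl h'
    · exact h'
  have hNb : ∀ x : α, f.SameCycle x b → N' x := by
    intro x h
    rcases hB' x b h with h' | ⟨h', -⟩
    · exact Or.inr h'
    · exact h'
  -- the map on classes
  set g : α → Quotient (SameCycle.setoid f) ⊕ Bool := fun x =>
    if N' x then Sum.inr (decide (ρ.SameCycle x a)) else
      Sum.inl (Quotient.mk (SameCycle.setoid f) x) with hg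
  have hresp : ∀ x y : α, ρ.SameCycle x y → g x = g y := by
    intro x y h
    by_cases hx : N' x
    · have hy : N' y := by
        rcases hx with h' | h'
        · exact Or.inl (h.symm.trans h')
        · exact Or.inr (h.symm.trans h')
      rw [hg]; simp only [if_pos hx, if_pos hy]
      have : ρ.SameCycle x a ↔ ρ.SameCycle y a :=
        ⟨fun h' => h.symm.trans h', fun h' => h.trans h'⟩
      simp [decide_eq_decide.mpr this]
    · have hy : ¬ N' y := by
        intro hy
        rcases hy with h' | h'
        · exact hx (Or.inl (h.trans h'))
        · exact hx (Or.inr (h.trans h'))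
      rw [hg]; simp only [if_neg hx, if_neg hy]
      rcases hB x y h with h' | ⟨h', -⟩
      · exact congrArg _ (Quotient.sound h')
      · rcases h' with h' | h'
        · exact absurd (hNa x h') hx
        · exact absurd (hNb x h') hx
  set F : Quotient (SameCycle.setoid ρ) ⊕ Unit → Quotient (SameCycle.setoid f) ⊕ Bool :=
    Sum.elim (Quotient.lift g hresp) (fun _ => Sum.inl (Quotient.mk (SameCycle.setoid f) a))
    with hF
  have hinj : Function.Injective F := by
    rintro (u | u) (v | v) huv
    · induction u using Quotient.ind with | _ x =>
      induction v using Quotient.ind with | _ y =>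
      simp only [hF, Sum.elim_inl, Quotient.lift_mk] at huv
      congr 1
      refine Quotient.sound ?_
      by_cases hx : N' x <;> by_cases hy : N' y
      · rw [hg] at huv; simp only [if_pos hx, if_pos hy, Sum.inr.injEq,
          decide_eq_decide] at huv
        by_cases hxa : ρ.SameCycle x a
        · exact hxa.trans (huv.mp hxa).symm
        · have hxb : ρ.SameCycle x b := hx.resolve_left hxa
          have hyb : ρ.SameCycle y b := hy.resolve_left (fun h' => hxa (huv.mpr h'))
          exact hxb.trans hyb.symm
      · rw [hg] at huv; simp [if_pos hx, if_neg hy] at huv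
      · rw [hg] at huv; simp [if_neg hx, if_pos hy] at huv
      · rw [hg] at huv; simp only [if_neg hx, if_neg hy, Sum.inl.injEq] at huv
        have h' : f.SameCycle x y := Quotient.exact huv
        rcases hB' x y h' with h'' | ⟨h'', -⟩
        · exact h''
        · exact absurd h'' hx
    · exfalso
      induction u using Quotient.ind with | _ x =>
      simp only [hF, Sum.elim_inl, Sum.elim_inr, Quotient.lift_mk] at huv
      by_cases hx : N' x
      · rw [hg] at huv; simp [if_pos hx] at huv
      · rw [hg] at huv; simp only [if_neg hx, Sum.inl.injEq] at huv
        exact hx (hNa x (Quotient.exact huv))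
    · exfalso
      induction v using Quotient.ind with | _ x =>
      simp only [hF, Sum.elim_inl, Sum.elim_inr, Quotient.lift_mk] at huv
      by_cases hx : N' x
      · rw [hg] at huv; simp [if_pos hx] at huv
      · rw [hg] at huv; simp only [if_neg hx, Sum.inl.injEq] at huv
        exact hx (hNa x (Quotient.exact huv.symm))
    · simp
  have hcard := Nat.card_le_card_of_injective F hinj
  rw [Nat.card_sum, Nat.card_sum] at hcard
  simpa [Q] using hcard

theorem cycleCount_le_Q (f : Perm α) : cycleCount f ≤ Q f := by
  classical
  set pt : ↥f.cycleFactorsFinset → α := fun c =>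
    ((mem_cycleFactorsFinset_iff.mp c.2).1).choose with hptdef
  have hptne : ∀ c : ↥f.cycleFactorsFinset, (c : Perm α) (pt c) ≠ pt c := fun c =>
    ((mem_cycleFactorsFinset_iff.mp c.2).1).choose_spec.1
  have hpt : ∀ c : ↥f.cycleFactorsFinset, pt c ∈ (c : Perm α).support := fun c =>
    Equiv.Perm.mem_support.mpr (hptne c)
  have hptf : ∀ c : ↥f.cycleFactorsFinset, f (pt c) ≠ pt c := by
    intro c
    rw [← (mem_cycleFactorsFinset_iff.mp c.2).2 _ (hpt c)]
    exact hptne c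
  have hfix : ∀ (x : α) (i : ℤ), f x = x → (f ^ i) x = x := fun x i hx =>
    Equiv.Perm.zpow_apply_eq_self_of_apply_eq_self hx i
  set j : (↥f.cycleFactorsFinset ⊕ {x : α // f x = x}) → Quotient (SameCycle.setoid f) :=
    fun u =>
      match u with
      | Sum.inl c => Quotient.mk (SameCycle.setoid f) (pt c)
      | Sum.inr x => Quotient.mk (SameCycle.setoid f) x.1
    with hj
  have hinj : Function.Injective j := by
    rintro (c1 | x1) (c2 | x2) huv
    · have h : f.SameCycle (pt c1) (pt c2) := Quotient.exact huv
      have h1 : (c1 : Perm α) = f.cycleOf (pt c1) := Equiv.Perm.cycle_is_cycleOf (hpt c1) c1.2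
      have h2 : (c2 : Perm α) = f.cycleOf (pt c2) := Equiv.Perm.cycle_is_cycleOf (hpt c2) c2.2
      have : (c1 : Perm α) = (c2 : Perm α) := by rw [h1, h2, h.cycleOf_eq]
      exact congrArg _ (Subtype.ext this)
    · exfalso
      have h : f.SameCycle (pt c1) x2.1 := Quotient.exact huv
      obtain ⟨i, hi⟩ := h.symm
      rw [hfix x2.1 i x2.2] at hi
      exact hptf c1 (by rw [← hi]; exact x2.2)
    · exfalso
      have h : f.SameCycle (pt c2) x1.1 := (Quotient.exact huv).symm
      obtain ⟨i, hi⟩ := h.symm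
      rw [hfix x1.1 i x1.2] at hi
      exact hptf c2 (by rw [← hi]; exact x1.2)
    · have h : f.SameCycle x1.1 x2.1 := Quotient.exact huv
      obtain ⟨i, hi⟩ := h
      rw [hfix x1.1 i x1.2] at hi
      exact congrArg _ (Subtype.ext hi)
  have hcard := Nat.card_le_card_of_injective j hinj
  rw [Nat.card_sum] at hcard
  have h1 : Nat.card ↥f.cycleFactorsFinset = f.cycleFactorsFinset.card := by
    simp [Nat.card_eq_fintype_card]
  have h2 : Nat.card {x : α // f x = x} = (Finset.univ.filter fun x => f x = x).card := by
    rw [Nat.card_eq_fintype_card, Fintype.card_subtype]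
  have h3 : Multiset.card f.cycleType = f.cycleFactorsFinset.card := by
    rw [Equiv.Perm.cycleType_def, Multiset.card_map]; rfl
  rw [h1, h2] at hcard
  unfold cycleCount
  rw [h3]
  exact hcard

theorem Q_mul_le (τ : Perm α) : ∀ (f : Perm α) (k : ℕ),
    τ.cycleType = Multiset.replicate k 2 → Q (f * τ) ≤ Q f + k := by
  induction τ using Equiv.Perm.cycle_induction_on with
  | base_one =>
    intro f k hk
    have : k = 0 := by
      have := congrArg Multiset.card hk
      simpa [Equiv.Perm.cycleType_one] using this.symm
    simp [this]
  | base_cycles c hc =>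
    intro f k hk
    rw [hc.cycleType] at hk
    have hk1 : k = 1 := by
      have := congrArg Multiset.card hk
      simpa using this.symm
    subst hk1
    have h2 : c.support.card = 2 := by
      have : c.support.card ∈ Multiset.replicate 1 2 := by
        rw [← hk]; simp
      simpa using Multiset.eq_of_mem_replicate this
    obtain ⟨a, b, hab, rfl⟩ := Equiv.Perm.card_support_eq_two.mp h2
    have := Q_mul_swap_add_one_le f a b
    omega
  | induction_disjoint g h hd hgc ihg ihh =>
    intro f k hk
    rw [Equiv.Perm.Disjoint.cycleType_mul hd] at hk
    have hmem : ∀ x ∈ g.cycleType + h.cycleType, x = 2 := by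
      intro x hx
      rw [hk] at hx
      exact Multiset.eq_of_mem_replicate hx
    have hg2 : g.cycleType = Multiset.replicate (Multiset.card g.cycleType) 2 :=
      Multiset.eq_replicate_card.mpr fun x hx => hmem x (Multiset.mem_add.mpr (Or.inl hx))
    have hh2 : h.cycleType = Multiset.replicate (Multiset.card h.cycleType) 2 :=
      Multiset.eq_replicate_card.mpr fun x hx => hmem x (Multiset.mem_add.mpr (Or.inr hx))
    have hksum : Multiset.card g.cycleType + Multiset.card h.cycleType = k := by
      have := congrArg Multiset.card hk
      simpa using this
    calc Q (f * (g * h)) = Q (f * g * h) := by rw [mul_assoc]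
      _ ≤ Q (f * g) + Multiset.card h.cycleType := ihh (f * g) _ hh2
      _ ≤ Q f + Multiset.card g.cycleType + Multiset.card h.cycleType :=
          Nat.add_le_add_right (ihg f _ hg2) _
      _ = Q f + k := by omega

theorem Q_le_one {f : Perm α} (hf : f.IsCycle) (hsupp : f.support = Finset.univ) :
    Q f ≤ 1 := by
  have hsub : Subsingleton (Quotient (SameCycle.setoid f)) := by
    constructor
    rintro ⟨x⟩ ⟨y⟩
    refine Quotient.sound ?_
    have hx : f x ≠ x := Equiv.Perm.mem_support.mp (by rw [hsupp]; exact Finset.mem_univ x)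
    have hy : f y ≠ y := Equiv.Perm.mem_support.mp (by rw [hsupp]; exact Finset.mem_univ y)
    exact hf.sameCycle hx hy
  exact Finite.card_le_one_iff_subsingleton.mpr hsub

end CycleCountAux

theorem stmt_7 (n k : ℕ) (σ τ : Equiv.Perm (Fin n))
    (hσ : σ.IsCycle) (hsupp : σ.support = Finset.univ)
    (hτ : τ.cycleType = Multiset.replicate k 2) :
    cycleCount (σ * τ) ≤ k + 1 := by
  have h1 := CycleCountAux.cycleCount_le_Q (σ * τ)
  have h2 := CycleCountAux.Q_mul_le τ σ k hτ
  have h3 := CycleCountAux.Q_le_one hσ hsupp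
  omega
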